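/- Let (Ω, Σ, μ) be a measure space and f, g, h ∈ L²(Ω, 𝕜) (𝕜 = ℝ or ℂ) with ∫_Ω |h(s)|² dμ(s) = 1, and let φ, Φ, γ, Γ ∈ 𝕜 satisfy Re(Φ·conj(φ)) > 0 and Re(Γ·conj(γ)) > 0. If ∫_Ω Re[(Φh(s) − f(s))·(conj(f(s)) − conj(φ)·conj(h(s)))] dμ(s) ≥ 0 and ∫_Ω Re[(Γh(s) − g(s))·(conj(g(s)) − conj(γ)·conj(h(s)))] dμ(s) ≥ 0, then |∫_Ω f(s)conj(g(s)) dμ − ∫_Ω f(s)conj(h(s)) dμ · ∫_Ω h(s)conj(g(s)) dμ| ≤ (1/4)·M(φ,Φ)·M(γ,Γ)·|∫_Ω f(s)conj(h(s)) dμ · ∫_Ω h(s)conj(g(s)) dμ|, where M(φ,Φ) := [((|Φ| − |φ|)² + 4(|Φ·conj(φ)| − Re(Φ·conj(φ))))/Re(Φ·conj(φ))]^{1/2}. -/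

import Mathlib

open MeasureTheory

/-- The constant `M(c, C)`. -/
noncomputable def grussM {𝕜 : Type*} [RCLike 𝕜] (c C : 𝕜) : ℝ :=
  Real.sqrt (((‖C‖ - ‖c‖) ^ 2 +
      4 * (‖C * starRingEnd 𝕜 c‖ - RCLike.re (C * starRingEnd 𝕜 c))) /
    RCLike.re (C * starRingEnd 𝕜 c))

section Aux

open RCLike

variable {𝕜 : Type*} [RCLike 𝕜]

local notation "⟪" x ", " y "⟫" => @inner 𝕜 _ _ x y

lemma grussM_nonneg (c C : 𝕜) : 0 ≤ grussM c C := Real.sqrt_nonneg _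

lemma grussM_sq (c C : 𝕜) (h : 0 < re (C * starRingEnd 𝕜 c)) :
    grussM c C ^ 2 = ((‖C‖ - ‖c‖) ^ 2 +
      4 * (‖C * starRingEnd 𝕜 c‖ - re (C * starRingEnd 𝕜 c))) /
    re (C * starRingEnd 𝕜 c) := by
  have h1 : re (C * starRingEnd 𝕜 c) ≤ ‖C * starRingEnd 𝕜 c‖ := RCLike.re_le_norm _
  exact Real.sq_sqrt (div_nonneg (by nlinarith [sq_nonneg (‖C‖ - ‖c‖)]) h.le)

lemma gruss_scalar (φ Φ : 𝕜) (hr : 0 < re (Φ * starRingEnd 𝕜 φ)) (α : 𝕜) :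
    re (Φ * starRingEnd 𝕜 α) + re (starRingEnd 𝕜 φ * α)
      - re (Φ * starRingEnd 𝕜 φ) - ‖α‖ ^ 2 ≤ grussM φ Φ ^ 2 / 4 * ‖α‖ ^ 2 := by
  rw [grussM_sq _ _ hr]
  set r := re (Φ * starRingEnd 𝕜 φ) with hrdef
  have hAB : ‖Φ * starRingEnd 𝕜 φ‖ = ‖Φ‖ * ‖φ‖ := by
    rw [norm_mul, norm_conj]
  have e1 : re (Φ * starRingEnd 𝕜 α) ≤ ‖Φ‖ * ‖α‖ := by
    calc re (Φ * starRingEnd 𝕜 α) ≤ ‖Φ * starRingEnd 𝕜 α‖ := RCLike.re_le_norm _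
    _ = ‖Φ‖ * ‖α‖ := by rw [norm_mul, norm_conj]
  have e2 : re (starRingEnd 𝕜 φ * α) ≤ ‖φ‖ * ‖α‖ := by
    calc re (starRingEnd 𝕜 φ * α) ≤ ‖starRingEnd 𝕜 φ * α‖ := RCLike.re_le_norm _
    _ = ‖φ‖ * ‖α‖ := by rw [norm_mul, norm_conj]
  rw [hAB]
  rw [show ((‖Φ‖ - ‖φ‖) ^ 2 + 4 * (‖Φ‖ * ‖φ‖ - r)) / r / 4 * ‖α‖ ^ 2
      = ((‖Φ‖ - ‖φ‖) ^ 2 + 4 * (‖Φ‖ * ‖φ‖ - r)) * ‖α‖ ^ 2 / (r * 4) by ring,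
    le_div_iff₀ (by positivity : (0:ℝ) < r * 4)]
  nlinarith [sq_nonneg ((‖Φ‖ + ‖φ‖) * ‖α‖ - 2 * r), norm_nonneg α, sq_nonneg (‖Φ‖ - ‖φ‖)]

variable {E : Type*} [NormedAddCommGroup E] [InnerProductSpace 𝕜 E]

lemma gruss_component (e x : E) (he : ‖e‖ = 1) (φ Φ : 𝕜)
    (hr : 0 < re (Φ * starRingEnd 𝕜 φ))
    (hx : 0 ≤ re ⟪x - φ • e, Φ • e - x⟫) :
    ‖x - ⟪e, x⟫ • e‖ ≤ 1 / 2 * grussM φ Φ * ‖⟪e, x⟫‖ := by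
  have hee : ⟪e, e⟫ = 1 := by
    rw [inner_self_eq_norm_sq_to_K, he]; norm_num
  set α : 𝕜 := ⟪e, x⟫ with hα
  have hxe : ⟪x, e⟫ = starRingEnd 𝕜 α := by rw [hα, ← inner_conj_symm]
  have hnorm : ‖x - α • e‖ ^ 2 = ‖x‖ ^ 2 - ‖α‖ ^ 2 := by
    rw [norm_sub_sq (𝕜 := 𝕜), inner_smul_right, norm_smul, he, mul_one]
    rw [hxe]
    rw [RCLike.mul_conj, ← RCLike.ofReal_pow, RCLike.ofReal_re]
    ring
  have hexp : re ⟪x - φ • e, Φ • e - x⟫ =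
      re (Φ * starRingEnd 𝕜 α) + re (starRingEnd 𝕜 φ * α)
        - re (Φ * starRingEnd 𝕜 φ) - ‖x‖ ^ 2 := by
    have hself : re ⟪x, x⟫ = ‖x‖ ^ 2 := inner_self_eq_norm_sq x
    rw [inner_sub_left, inner_sub_right, inner_sub_right, inner_smul_left,
      inner_smul_right, inner_smul_left, inner_smul_right, hee, hxe, mul_one,
      mul_comm (starRingEnd 𝕜 φ) Φ]
    simp only [map_sub, ← hα]
    rw [hself]
    ring
  have h1 : ‖x‖ ^ 2 - ‖α‖ ^ 2 ≤
      re (Φ * starRingEnd 𝕜 α) + re (starRingEnd 𝕜 φ * α)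
        - re (Φ * starRingEnd 𝕜 φ) - ‖α‖ ^ 2 := by
    rw [hexp] at hx; linarith
  have h2 := gruss_scalar φ Φ hr α
  have h3 : ‖x - α • e‖ ^ 2 ≤ (1 / 2 * grussM φ Φ * ‖α‖) ^ 2 := by
    rw [hnorm]
    calc ‖x‖ ^ 2 - ‖α‖ ^ 2 ≤ grussM φ Φ ^ 2 / 4 * ‖α‖ ^ 2 := le_trans h1 h2
    _ = (1 / 2 * grussM φ Φ * ‖α‖) ^ 2 := by ring
  have hM := grussM_nonneg φ Φ
  calc ‖x - α • e‖ = Real.sqrt (‖x - α • e‖ ^ 2) := by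
        rw [Real.sqrt_sq (norm_nonneg _)]
  _ ≤ Real.sqrt ((1 / 2 * grussM φ Φ * ‖α‖) ^ 2) := Real.sqrt_le_sqrt h3
  _ = 1 / 2 * grussM φ Φ * ‖α‖ := Real.sqrt_sq (by
        have := norm_nonneg α; nlinarith)

lemma gruss_abstract (e x y : E) (he : ‖e‖ = 1) (φ Φ γ Γ : 𝕜)
    (hφΦ : 0 < re (Φ * starRingEnd 𝕜 φ))
    (hγΓ : 0 < re (Γ * starRingEnd 𝕜 γ))
    (hx : 0 ≤ re ⟪x - φ • e, Φ • e - x⟫)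
    (hy : 0 ≤ re ⟪y - γ • e, Γ • e - y⟫) :
    ‖⟪y, x⟫ - ⟪e, x⟫ * ⟪y, e⟫‖ ≤
      (1 / 4 : ℝ) * grussM φ Φ * grussM γ Γ * ‖⟪e, x⟫ * ⟪y, e⟫‖ := by
  have hee : ⟪e, e⟫ = 1 := by
    rw [inner_self_eq_norm_sq_to_K, he]; norm_num
  set α : 𝕜 := ⟪e, x⟫ with hα
  set β : 𝕜 := ⟪e, y⟫ with hβ
  have hid : ⟪y - β • e, x - α • e⟫ = ⟪y, x⟫ - α * ⟪y, e⟫ := by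
    rw [inner_sub_left, inner_sub_right, inner_sub_right, inner_smul_left,
      inner_smul_right, inner_smul_left, inner_smul_right, hee, ← hα]
    have : ⟪y, e⟫ = starRingEnd 𝕜 β := by rw [hβ, ← inner_conj_symm]
    rw [this]
    ring
  have hCS : ‖⟪y - β • e, x - α • e⟫‖ ≤ ‖y - β • e‖ * ‖x - α • e‖ :=
    norm_inner_le_norm _ _
  have hbx := gruss_component e x he φ Φ hφΦ hx
  have hby := gruss_component e y he γ Γ hγΓ hy
  have hye : ‖⟪y, e⟫‖ = ‖β‖ := by
    rw [hβ, ← inner_conj_symm, norm_conj]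
  calc ‖⟪y, x⟫ - α * ⟪y, e⟫‖ = ‖⟪y - β • e, x - α • e⟫‖ := by rw [hid]
  _ ≤ ‖y - β • e‖ * ‖x - α • e‖ := hCS
  _ ≤ (1 / 2 * grussM γ Γ * ‖β‖) * (1 / 2 * grussM φ Φ * ‖α‖) := by
      apply mul_le_mul hby hbx (norm_nonneg _)
        (mul_nonneg (mul_nonneg (by norm_num) (grussM_nonneg _ _)) (norm_nonneg _))
  _ = (1 / 4 : ℝ) * grussM φ Φ * grussM γ Γ * (‖α‖ * ‖⟪y, e⟫‖) := by
      rw [hye]; ring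
  _ = (1 / 4 : ℝ) * grussM φ Φ * grussM γ Γ * ‖α * ⟪y, e⟫‖ := by
      rw [norm_mul]

variable {Ω : Type*} [MeasurableSpace Ω] {μ : Measure Ω}

lemma memL2_integrable_conj_mul {f g : Ω → 𝕜} (hf : MemLp f 2 μ) (hg : MemLp g 2 μ) :
    Integrable (fun s => starRingEnd 𝕜 (f s) * g s) μ := by
  have h := L2.integrable_inner (𝕜 := 𝕜) (hf.toLp f) (hg.toLp g)
  apply h.congr
  filter_upwards [hf.coeFn_toLp, hg.coeFn_toLp] with s h1 h2
  rw [RCLike.inner_apply, h1, h2]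
  exact mul_comm _ _

lemma inner_toLp {f g : Ω → 𝕜} (hf : MemLp f 2 μ) (hg : MemLp g 2 μ) :
    ⟪(hf.toLp f : Lp 𝕜 2 μ), hg.toLp g⟫ = ∫ s, starRingEnd 𝕜 (f s) * g s ∂μ := by
  rw [L2.inner_def]
  apply integral_congr_ae
  filter_upwards [hf.coeFn_toLp, hg.coeFn_toLp] with s h1 h2
  rw [RCLike.inner_apply, h1, h2]
  exact mul_comm _ _

lemma re_inner_cond {f h : Ω → 𝕜} (hf : MemLp f 2 μ) (hh : MemLp h 2 μ) (φ Φ : 𝕜) :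
    re ⟪(hf.toLp f : Lp 𝕜 2 μ) - φ • hh.toLp h, Φ • hh.toLp h - hf.toLp f⟫ =
      ∫ s, re ((Φ * h s - f s) *
        (starRingEnd 𝕜 (f s) - starRingEnd 𝕜 φ * starRingEnd 𝕜 (h s))) ∂μ := by
  set F : Lp 𝕜 2 μ := hf.toLp f
  set H : Lp 𝕜 2 μ := hh.toLp h
  rw [L2.inner_def, ← integral_re (L2.integrable_inner _ _)]
  apply integral_congr_ae
  filter_upwards [Lp.coeFn_sub F (φ • H), Lp.coeFn_sub (Φ • H) F,
    Lp.coeFn_smul φ H, Lp.coeFn_smul Φ H, hf.coeFn_toLp, hh.coeFn_toLp]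
    with s e1 e2 e3 e4 e5 e6
  rw [RCLike.inner_apply, e1, e2]
  simp only [Pi.sub_apply, e3, e4, Pi.smul_apply, smul_eq_mul, e5, e6]
  congr 1
  simp only [map_sub, map_mul]
  rw [show (F : Ω → 𝕜) s = f s from e5, show (H : Ω → 𝕜) s = h s from e6]

end Aux

/-- **A Grüss type integral inequality** (Proposition 1). -/
theorem gruss_integral {Ω 𝕜 : Type*} [MeasurableSpace Ω] [RCLike 𝕜]
    (μ : Measure Ω) (f g h : Ω → 𝕜)
    (hf : MemLp f 2 μ) (hg : MemLp g 2 μ) (hh : MemLp h 2 μ)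
    (hh1 : ∫ s, ‖h s‖ ^ 2 ∂μ = 1)
    (φ Φ γ Γ : 𝕜)
    (hφΦ : 0 < RCLike.re (Φ * starRingEnd 𝕜 φ))
    (hγΓ : 0 < RCLike.re (Γ * starRingEnd 𝕜 γ))
    (h1 : 0 ≤ ∫ s, RCLike.re ((Φ * h s - f s) *
      (starRingEnd 𝕜 (f s) - starRingEnd 𝕜 φ * starRingEnd 𝕜 (h s))) ∂μ)
    (h2 : 0 ≤ ∫ s, RCLike.re ((Γ * h s - g s) *
      (starRingEnd 𝕜 (g s) - starRingEnd 𝕜 γ * starRingEnd 𝕜 (h s))) ∂μ) :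
    ‖(∫ s, f s * starRingEnd 𝕜 (g s) ∂μ) -
        (∫ s, f s * starRingEnd 𝕜 (h s) ∂μ) * ∫ s, h s * starRingEnd 𝕜 (g s) ∂μ‖ ≤
      (1 / 4 : ℝ) * grussM φ Φ * grussM γ Γ *
        ‖(∫ s, f s * starRingEnd 𝕜 (h s) ∂μ) * ∫ s, h s * starRingEnd 𝕜 (g s) ∂μ‖ := by
  set F : Lp 𝕜 2 μ := hf.toLp f with hF
  set G : Lp 𝕜 2 μ := hg.toLp g with hG
  set H : Lp 𝕜 2 μ := hh.toLp h with hH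
  have hHnorm : ‖H‖ = 1 := by
    have e1 : RCLike.re (@inner 𝕜 _ _ H H) = ‖H‖ ^ 2 := inner_self_eq_norm_sq H
    have e2 : (@inner 𝕜 _ _ H H) = ∫ s, starRingEnd 𝕜 (h s) * h s ∂μ := inner_toLp hh hh
    have e3 : ∫ s, RCLike.re (starRingEnd 𝕜 (h s) * h s) ∂μ = 1 := by
      rw [← hh1]
      apply integral_congr_ae
      filter_upwards with s
      rw [RCLike.conj_mul, ← RCLike.ofReal_pow, RCLike.ofReal_re]
    have e4 : ‖H‖ ^ 2 = 1 := by
      rw [← e1, e2, ← integral_re (memL2_integrable_conj_mul hh hh), e3]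
    calc ‖H‖ = Real.sqrt (‖H‖ ^ 2) := (Real.sqrt_sq (norm_nonneg _)).symm
    _ = 1 := by rw [e4, Real.sqrt_one]
  have hx : 0 ≤ RCLike.re (@inner 𝕜 _ _ (F - φ • H) (Φ • H - F)) := by
    rw [hF, hH, re_inner_cond hf hh φ Φ]; exact h1
  have hy : 0 ≤ RCLike.re (@inner 𝕜 _ _ (G - γ • H) (Γ • H - G)) := by
    rw [hG, hH, re_inner_cond hg hh γ Γ]; exact h2
  have key := gruss_abstract H F G hHnorm φ Φ γ Γ hφΦ hγΓ hx hy
  have iGF : (@inner 𝕜 _ _ G F) = ∫ s, f s * starRingEnd 𝕜 (g s) ∂μ := by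
    rw [hG, hF, inner_toLp hg hf]
    exact integral_congr_ae (Filter.Eventually.of_forall fun s => mul_comm _ _)
  have iHF : (@inner 𝕜 _ _ H F) = ∫ s, f s * starRingEnd 𝕜 (h s) ∂μ := by
    rw [hH, hF, inner_toLp hh hf]
    exact integral_congr_ae (Filter.Eventually.of_forall fun s => mul_comm _ _)
  have iGH : (@inner 𝕜 _ _ G H) = ∫ s, h s * starRingEnd 𝕜 (g s) ∂μ := by
    rw [hG, hH, inner_toLp hg hh]
    exact integral_congr_ae (Filter.Eventually.of_forall fun s => mul_comm _ _)
  rw [iGF, iHF, iGH] at key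
  exact key
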